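/- Let κ be an infinite cardinal with κ^ω = κ. Suppose: (i) (p_{T,n} : T ∈ 𝒯, n ∈ ω) is a family of pairwise Rudin–Keisler incomparable selective ultrafilters on ω with l(T) ∈ p_{T,n} for all T, n; (ii) (ℰ_T : T ∈ 𝒯) is a family of subsets of (ℤ^(κ))^ω such that each ℰ_T is maximal among subsets linearly independent mod l(T)* and ℰ_{T↾m} ⊆ ℰ_T for m ≤ length(T); (iii) for each T ∈ 𝒯 and n ∈ ω, ℱ_{T,n} ⊆ (ℤ^(κ))^ω is a set such that {[χ⃗_ξ]_{p_{T,n}} : ξ < κ} ∪ {[f]_{p_{T,n}} : f ∈ ℱ_{T,n}} is a free basis of the group G_{T,n}, where G_{T,n} is the intersection of Ult(ℤ, p_{T,n}) with the subgroup of Ult(ℚ, p_{T,n}) generated by {(1/n!)·[f]_{p_{T,n}} : f ∈ ℰ_T} ∪ {(1/n!)·[χ⃗_ξ]_{p_{T,n}} : ξ < κ}; and (iv) ℤ^(κ) carries a group topology such that for every T ∈ 𝒯, n ∈ ω and every f ∈ ℱ_{T,n}, the sequence (f(k) : k ∈ ω) has a p_{T,n}-limit in ℤ^(κ). Then for every m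 ∈ ω the product topology on (ℤ^(κ))^m is countably compact. -/

import Mathlib

open Cardinal Filter Set Pointwise

noncomputable section

/-- A free (nonprincipal) ultrafilter on ω. -/
def IsFreeUltrafilter (p : Ultrafilter ℕ) : Prop := ∀ n : ℕ, p ≠ pure n

/-- A selective ultrafilter on ω. -/
def IsSelective (p : Ultrafilter ℕ) : Prop :=
  IsFreeUltrafilter p ∧
  ∀ A : ℕ → Set ℕ,
    (∀ k, (A k).Nonempty) → (Pairwise fun k l => Disjoint (A k) (A l)) →
    (⋃ k, A k) = Set.univ →
    (∃ k, A k ∈ p) ∨ ∃ B ∈ p, ∀ k, ∃! n, n ∈ B ∩ A k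

/-- Rudin–Keisler order: `U ≤ V` iff `V = f_*(U)` for some `f`. -/
def RKle (U V : Ultrafilter ℕ) : Prop := ∃ f : ℕ → ℕ, Ultrafilter.map f U = V

/-- Rudin–Keisler incomparability. -/
def RKIncomp (U V : Ultrafilter ℕ) : Prop := ¬ RKle U V ∧ ¬ RKle V U

/-- The index set of order type (the initial ordinal of) `κ`. -/
abbrev Idx (κ : Cardinal) : Type _ := ↥(Set.Iio κ.ord)

/-- The free abelian group `ℤ^(κ)` of finitely supported integer functions on `κ`. -/
abbrev GZ (κ : Cardinal) := Idx κ →₀ ℤ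

/-- The ℚ-vector space `ℚ^(κ)` of finitely supported rational functions on `κ`. -/
abbrev GQ (κ : Cardinal) := Idx κ →₀ ℚ

/-- The canonical embedding `ℤ^(κ) → ℚ^(κ)`. -/
def toQ (κ : Cardinal) (f : GZ κ) : GQ κ :=
  Finsupp.mapRange (Int.cast : ℤ → ℚ) Int.cast_zero f

/-- The characteristic function `χ_ξ`. -/
def chi (κ : Cardinal) (ξ : Idx κ) : GZ κ := Finsupp.single ξ 1

/-- The class `[f]_p` of a sequence `f : ω → ℤ^(κ)` in the ultrapower
`Ult(ℚ, p) = (ℚ^(κ))^ω / p`, realized as a germ. -/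
def cls (κ : Cardinal) (p : Ultrafilter ℕ) (f : ℕ → GZ κ) :
    Filter.Germ (↑p : Filter ℕ) (GQ κ) :=
  (↑(fun n => toQ κ (f n)) : Filter.Germ (↑p : Filter ℕ) (GQ κ))

/-- The class `[χ⃗_ξ]_p` of the constant sequence with value `χ_ξ`. -/
def clsChi (κ : Cardinal) (p : Ultrafilter ℕ) (ξ : Idx κ) :
    Filter.Germ (↑p : Filter ℕ) (GQ κ) :=
  cls κ p (fun _ => chi κ ξ)

/-- `cls` as an additive homomorphism. -/
def clsHom (κ : Cardinal) (p : Ultrafilter ℕ) :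
    (ℕ → GZ κ) →+ Filter.Germ (↑p : Filter ℕ) (GQ κ) :=
  AddMonoidHom.mk' (cls κ p) (by
    intro a b
    unfold cls
    have h : (fun n => toQ κ ((a + b) n)) =
        (fun n => toQ κ (a n)) + (fun n => toQ κ (b n)) := by
      funext n
      simp only [Pi.add_apply, toQ]
      exact Finsupp.mapRange_add (fun x y => by push_cast; ring) _ _
    rw [h, ← Filter.Germ.coe_add])

/-- `Ult(ℤ, p)`: the subgroup of `Ult(ℚ, p)` consisting of classes of
integer-valued sequences. -/
def UltZ (κ : Cardinal) (p : Ultrafilter ℕ) :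
    AddSubgroup (Filter.Germ (↑p : Filter ℕ) (GQ κ)) :=
  (clsHom κ p).range

/-- `ℱ` is linearly independent mod `A*`. -/
def LinIndepMod (κ : Cardinal) (A : Set ℕ) (F : Set (ℕ → GZ κ)) : Prop :=
  ∀ p : Ultrafilter ℕ, IsFreeUltrafilter p → A ∈ p →
    (∀ f ∈ F, ∀ g ∈ F, f ≠ g → cls κ p f ≠ cls κ p g) ∧
    LinearIndependent ℚ
      (Sum.elim (fun f : F => cls κ p ↑f) (fun ξ : Idx κ => clsChi κ p ξ))

/-- `ℰ` is maximal (w.r.t. inclusion) among subsets linearly independent mod `A*`. -/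
def MaximalLinIndepMod (κ : Cardinal) (A : Set ℕ) (E : Set (ℕ → GZ κ)) : Prop :=
  LinIndepMod κ A E ∧ ∀ E' : Set (ℕ → GZ κ), LinIndepMod κ A E' → E ⊆ E' → E' = E

/-- A finite tower in ω: a finite decreasing sequence of infinite subsets of ω. -/
def IsTower (T : List (Set ℕ)) : Prop :=
  (∀ A ∈ T, A.Infinite) ∧
  ∀ i : ℕ, ∀ h : i + 1 < T.length, T.get ⟨i + 1, h⟩ ⊆ T.get ⟨i, Nat.lt_of_succ_lt h⟩

/-- `l(T)`: the last term of a finite tower, with `l(∅) = ω`. -/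
def lastOf (T : List (Set ℕ)) : Set ℕ := T.getLastD Set.univ

/-- `x` is a `p`-limit of the sequence `s`. -/
def IsPLim {X : Type*} [TopologicalSpace X] (p : Ultrafilter ℕ) (s : ℕ → X) (x : X) : Prop :=
  ∀ U ∈ nhds x, {n | s n ∈ U} ∈ p

/-- Countable compactness: every countable open cover has a finite subcover. -/
def CountablyCompactSp (X : Type*) [TopologicalSpace X] : Prop :=
  ∀ 𝒰 : Set (Set X), 𝒰.Countable → (∀ u ∈ 𝒰, IsOpen u) → ⋃₀ 𝒰 = Set.univ →
    ∃ ℱ ⊆ 𝒰, ℱ.Finite ∧ ⋃₀ ℱ = Set.univ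


/-- The subgroup `G_{T,n}`: the intersection of `Ult(ℤ,p)` with the subgroup of
`Ult(ℚ,p)` generated by `{(1/n!)·[f]_p : f ∈ S} ∪ {(1/n!)·[χ⃗_ξ]_p : ξ < κ}`. -/
def Gsub (κ : Cardinal) (p : Ultrafilter ℕ) (S : Set (ℕ → GZ κ)) (n : ℕ) :
    AddSubgroup (Filter.Germ (↑p : Filter ℕ) (GQ κ)) :=
  UltZ κ p ⊓ AddSubgroup.closure
    ({x | ∃ f ∈ S, x = ((n.factorial : ℚ))⁻¹ • cls κ p f} ∪
     {x | ∃ ξ : Idx κ, x = ((n.factorial : ℚ))⁻¹ • clsChi κ p ξ})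

section AuxCC
variable {κ : Cardinal}

lemma freeUF_infinite {p : Ultrafilter ℕ} (hp : IsFreeUltrafilter p) {A : Set ℕ}
    (hA : A ∈ p) : A.Infinite := by
  by_contra h
  rw [Set.not_infinite] at h
  obtain ⟨x, _, hx⟩ := Ultrafilter.eq_pure_of_finite_mem h hA
  exact hp x hx

lemma toQ_inj (κ : Cardinal) : Function.Injective (toQ κ) := by
  intro f g h
  ext ξ
  have := DFunLike.congr_fun h ξ
  simp only [toQ, Finsupp.mapRange_apply] at this
  exact_mod_cast this

lemma cls_eq_iff {p : Ultrafilter ℕ} {f g : ℕ → GZ κ} :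
    cls κ p f = cls κ p g ↔ ∀ᶠ k in ↑p, f k = g k := by
  rw [cls, cls, Filter.Germ.coe_eq]
  constructor
  · intro h
    filter_upwards [h] with k hk using toQ_inj κ hk
  · intro h
    filter_upwards [h] with k hk
    rw [hk]

lemma germ_coe_sum {α M : Type*} [AddCommMonoid M] {l : Filter α} {ι : Type*}
    (s : Finset ι) (F : ι → α → M) :
    ((↑(∑ i ∈ s, F i) : Filter.Germ l M)) = ∑ i ∈ s, (↑(F i) : Filter.Germ l M) := by
  classical
  induction s using Finset.cons_induction with
  | empty => simp
  | cons a s ha ih =>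
    rw [Finset.sum_cons, Finset.sum_cons, ← ih, ← Filter.Germ.coe_add]

lemma isTower_iff {T : List (Set ℕ)} :
    IsTower T ↔ (∀ A ∈ T, A.Infinite) ∧ List.Chain' (fun a b => b ⊆ a) T := by
  unfold IsTower
  rw [List.Chain', List.isChain_iff_getElem]
  constructor
  · refine fun h => ⟨h.1, fun i hi => h.2 i (by omega)⟩
  · refine fun h => ⟨h.1, fun i hi => h.2 i (by omega)⟩

lemma tower_nil : IsTower ([] : List (Set ℕ)) := by
  constructor
  · intro A hA; simp at hA
  · intro i h; simp at h

lemma lastOf_nil : lastOf ([] : List (Set ℕ)) = Set.univ := rfl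

lemma tower_concat {T : List (Set ℕ)} {A : Set ℕ} (hT : IsTower T) (hA : A.Infinite)
    (hsub : A ⊆ lastOf T) :
    IsTower (T ++ [A]) ∧ lastOf (T ++ [A]) = A ∧ (T ++ [A]).take T.length = T := by
  refine ⟨?_, ?_, ?_⟩
  · rw [isTower_iff] at hT ⊢
    refine ⟨?_, ?_⟩
    · intro B hB
      rcases List.mem_append.1 hB with h | h
      · exact hT.1 B h
      · simp at h; subst h; exact hA
    · rw [List.Chain', List.isChain_append]
      refine ⟨hT.2, List.isChain_singleton _, ?_⟩
      intro x hx y hy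
      simp only [List.head?_cons, Option.mem_def, Option.some.injEq] at hy
      subst hy
      have : lastOf T = x := by
        unfold lastOf
        rw [List.getLastD_eq_getLast?, hx]
        rfl
      exact this ▸ hsub
  · exact List.getLastD_concat
  · exact List.take_left

end AuxCC
section AuxDep
variable {κ : Cardinal}

/-- A pointwise linear dependence of `h` on `E` and constants, valid on `A`. -/
def Dep (κ : Cardinal) (E : Set (ℕ → GZ κ)) (A : Set ℕ) (h : ℕ → GZ κ) : Prop :=
  ∃ (a : ℚ) (n : ℕ) (g : Fin n → ℕ → GZ κ) (c : Fin n → ℚ) (w : GQ κ), a ≠ 0 ∧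
    (∀ j, c j = 0 ∨ g j ∈ E) ∧
    ∀ k ∈ A, a • toQ κ (h k) = (∑ j, c j • toQ κ (g j k)) + w

lemma Dep.mono {E E' : Set (ℕ → GZ κ)} {A A' : Set ℕ} {h : ℕ → GZ κ}
    (hd : Dep κ E A h) (hE : E ⊆ E') (hA : A' ⊆ A) : Dep κ E' A' h := by
  obtain ⟨a, n, g, c, w, ha, hc, heq⟩ := hd
  exact ⟨a, n, g, c, w, ha, fun j => (hc j).imp id (fun h => hE h),
    fun k hk => heq k (hA hk)⟩

lemma dep_of_mem {E : Set (ℕ → GZ κ)} {A : Set ℕ} {h : ℕ → GZ κ} (hh : h ∈ E) :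
    Dep κ E A h :=
  ⟨1, 1, fun _ => h, fun _ => 1, 0, one_ne_zero, fun _ => Or.inr hh,
    fun k _ => by simp⟩

lemma dep_step {E : Set (ℕ → GZ κ)} {A : Set ℕ} (hmax : MaximalLinIndepMod κ A E)
    {h : ℕ → GZ κ} (hh : h ∉ E) :
    ∃ B : Set ℕ, B.Infinite ∧ B ⊆ A ∧ Dep κ E B h := by
  classical
  have hni : ¬ LinIndepMod κ A (insert h E) := by
    intro hli
    exact hh ((hmax.2 _ hli (Set.subset_insert _ _)) ▸ Set.mem_insert h E)
  unfold LinIndepMod at hni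
  push_neg at hni
  obtain ⟨q, hqfree, hAq, hnq⟩ := hni
  obtain ⟨hdistE, hindE⟩ := hmax.1 q hqfree hAq
  -- produce S ∈ q together with a dependence valid on S
  have key : ∃ S : Set ℕ, S ∈ q ∧ Dep κ E S h := by
    by_cases hd : ∀ f ∈ insert h E, ∀ g ∈ insert h E, f ≠ g → cls κ q f ≠ cls κ q g
    swap
    · -- two germs coincide
      push_neg at hd
      obtain ⟨f, hf, g, hg, hfg, heq⟩ := hd
      rcases Set.mem_insert_iff.1 hf with rfl | hfE
      · rcases Set.mem_insert_iff.1 hg with rfl | hgE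
        · exact absurd rfl hfg
        · refine ⟨{k | f k = g k}, ?_, 1, 1, fun _ => g, fun _ => 1, 0, one_ne_zero,
            fun _ => Or.inr hgE, fun k hk => by
              have hk2 : f k = g k := hk
              simp [hk2]⟩
          exact cls_eq_iff.1 heq
      · rcases Set.mem_insert_iff.1 hg with rfl | hgE
        · refine ⟨{k | g k = f k}, ?_, 1, 1, fun _ => f, fun _ => 1, 0, one_ne_zero,
            fun _ => Or.inr hfE, fun k hk => by
              have hk2 : g k = f k := hk
              simp [hk2]⟩
          exact cls_eq_iff.1 heq.symm
        · exact absurd heq ((hdistE f hfE g hgE) hfg)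
    · -- a nontrivial linear dependence
      have hnin := hnq hd
      rw [linearIndependent_iff] at hnin
      push_neg at hnin
      obtain ⟨l, hl0, hlne⟩ := hnin
      set ih : ↥(insert h E) := ⟨h, Set.mem_insert _ _⟩ with hih
      set v : (↥(insert h E)) ⊕ (Idx κ) → Filter.Germ (↑q : Filter ℕ) (GQ κ) :=
        Sum.elim (fun f : ↥(insert h E) => cls κ q ↑f) (fun ξ => clsChi κ q ξ) with hv
      -- the coefficient of h is nonzero
      have hinj : Function.Injective
          (Sum.map (Set.inclusion (Set.subset_insert h E)) (id : Idx κ → Idx κ)) :=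
        Function.Injective.sumMap (Set.inclusion_injective (Set.subset_insert h E))
          Function.injective_id
      set e : ((↥E) ⊕ (Idx κ)) ↪ ((↥(insert h E)) ⊕ (Idx κ)) := ⟨_, hinj⟩ with he
      have ha : l (Sum.inl ih) ≠ 0 := by
        intro ha0
        -- transfer the dependence to the smaller family
        have hsupp : ∀ j, j ∉ Set.range e → l j = 0 := by
          rintro (x | ξ) hj
          · rcases Set.mem_insert_iff.1 x.2 with hx | hx
            · have : x = ih := Subtype.ext hx
              rw [this]; exact ha0
            · exact absurd ⟨Sum.inl ⟨↑x, hx⟩, rfl⟩ hj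
          · exact absurd ⟨Sum.inr ξ, rfl⟩ hj
        set l' : ((↥E) ⊕ (Idx κ)) →₀ ℚ :=
          Finsupp.comapDomain e l (hinj.injOn) with hl'
        have hemb : Finsupp.embDomain e l' = l := by
          ext j
          by_cases hj : j ∈ Set.range e
          · obtain ⟨i, rfl⟩ := hj
            rw [Finsupp.embDomain_apply_self, hl', Finsupp.comapDomain_apply]
          · rw [Finsupp.embDomain_notin_range _ _ _ hj, hsupp j hj]
        have hcomp : v ∘ e = Sum.elim (fun f : ↥E => cls κ q ↑f) (fun ξ => clsChi κ q ξ) := by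
          funext i
          rcases i with f | ξ <;> rfl
        have h0 : Finsupp.linearCombination ℚ
            (Sum.elim (fun f : ↥E => cls κ q ↑f) (fun ξ => clsChi κ q ξ)) l' = 0 := by
          rw [← hcomp, ← Finsupp.linearCombination_embDomain, hemb]
          exact hl0
        have := linearIndependent_iff.1 hindE l' h0
        rw [← hemb, this] at hlne
        simp at hlne
      -- now extract the relation
      set l₀ := l.erase (Sum.inl ih) with hl₀def
      have hsplit : Finsupp.single (Sum.inl ih) (l (Sum.inl ih)) + l₀ = l :=
        Finsupp.single_add_erase _ l
      have hrel : l (Sum.inl ih) • cls κ q h =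
          ∑ i ∈ l₀.support, (-l₀ i) • v i := by
        have h3 := congrArg (Finsupp.linearCombination ℚ v) hsplit
        rw [map_add, hl0, Finsupp.linearCombination_single] at h3
        have hv' : v (Sum.inl ih) = cls κ q h := rfl
        rw [hv'] at h3
        have h4 := eq_neg_of_add_eq_zero_left h3
        rw [h4, Finsupp.linearCombination_apply, Finsupp.sum, ← Finset.sum_neg_distrib]
        exact Finset.sum_congr rfl (fun i _ => (neg_smul _ _).symm)
      -- sequences representing v
      set seq : ((↥(insert h E)) ⊕ (Idx κ)) → (ℕ → GQ κ) :=
        Sum.elim (fun f : ↥(insert h E) => fun k => toQ κ ((f : ℕ → GZ κ) k))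
          (fun ξ => fun _ => toQ κ (chi κ ξ)) with hseq
      have hvseq : ∀ i, v i = (↑(seq i) : Filter.Germ (↑q : Filter ℕ) (GQ κ)) := by
        rintro (f | ξ) <;> rfl
      have hgerm : (↑(fun k => l (Sum.inl ih) • toQ κ (h k)) :
            Filter.Germ (↑q : Filter ℕ) (GQ κ)) =
          (↑(fun k => ∑ i ∈ l₀.support, (-l₀ i) • seq i k) :
            Filter.Germ (↑q : Filter ℕ) (GQ κ)) := by
        have h1 : (↑(fun k => l (Sum.inl ih) • toQ κ (h k)) :
            Filter.Germ (↑q : Filter ℕ) (GQ κ)) = l (Sum.inl ih) • cls κ q h := by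
          rw [cls, ← Filter.Germ.coe_smul]
          rfl
        rw [h1, hrel]
        have h2 : ∀ i, (-l₀ i) • v i =
            (↑((-l₀ i) • seq i) : Filter.Germ (↑q : Filter ℕ) (GQ κ)) := by
          intro i; rw [hvseq i, Filter.Germ.coe_smul]
        calc ∑ i ∈ l₀.support, (-l₀ i) • v i
            = ∑ i ∈ l₀.support, (↑((-l₀ i) • seq i) : Filter.Germ (↑q : Filter ℕ) (GQ κ)) :=
              Finset.sum_congr rfl (fun i _ => h2 i)
          _ = (↑(∑ i ∈ l₀.support, (-l₀ i) • seq i) : Filter.Germ (↑q : Filter ℕ) (GQ κ)) :=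
              (germ_coe_sum _ _).symm
          _ = _ := by
              congr 1
              funext k
              simp [Finset.sum_apply]
      -- turn the germ identity into a pointwise identity on a member of q
      rw [Filter.Germ.coe_eq] at hgerm
      have hS : {k | l (Sum.inl ih) • toQ κ (h k)
          = ∑ i ∈ l₀.support, (-l₀ i) • seq i k} ∈ q := hgerm
      -- build the Dep data
      set n := l₀.support.card with hn
      set e2 : ↥(l₀.support) ≃ Fin n := l₀.support.equivFin with he2
      set gg : Fin n → (ℕ → GZ κ) := fun j =>
        Sum.elim (fun f : ↥(insert h E) => (f : ℕ → GZ κ)) (fun _ => fun _ => 0)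
          ((e2.symm j) : (↥(insert h E)) ⊕ (Idx κ)) with hgg
      set cc : Fin n → ℚ := fun j =>
        Sum.elim (fun f : ↥(insert h E) => -l₀ (Sum.inl f)) (fun _ => 0)
          ((e2.symm j) : (↥(insert h E)) ⊕ (Idx κ)) with hcc
      set ww : GQ κ := ∑ i ∈ l₀.support,
        Sum.elim (fun _ : ↥(insert h E) => (0 : GQ κ))
          (fun ξ => -l₀ (Sum.inr ξ) • toQ κ (chi κ ξ)) i with hww
      refine ⟨_, hS, l (Sum.inl ih), n, gg, cc, ww, ha, ?_, ?_⟩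
      · -- membership clause
        intro j
        rcases hmem : ((e2.symm j) : (↥(insert h E)) ⊕ (Idx κ)) with f | ξ
        · right
          rcases Set.mem_insert_iff.1 f.2 with hx | hx
          · exfalso
            have hfih : f = ih := Subtype.ext hx
            have hms := (e2.symm j).2
            rw [hmem, hfih] at hms
            have := Finsupp.mem_support_iff.1 hms
            exact this (Finsupp.erase_same)
          · simp only [hgg, hmem, Sum.elim_inl]
            exact hx
        · left
          simp only [hcc, hmem, Sum.elim_inr]
      · -- the pointwise equation
        intro k hk
        have hk' := hk
        rw [Set.mem_setOf_eq] at hk'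
        rw [hk']
        -- split the sum into the E-part and the constant part
        have hsplit2 : ∀ i ∈ l₀.support, (-l₀ i) • seq i k =
            (Sum.elim (fun f : ↥(insert h E) => -l₀ (Sum.inl f) • toQ κ ((f : ℕ → GZ κ) k))
              (fun _ => (0 : GQ κ)) i) +
            (Sum.elim (fun _ : ↥(insert h E) => (0 : GQ κ))
              (fun ξ => -l₀ (Sum.inr ξ) • toQ κ (chi κ ξ)) i) := by
          rintro (f | ξ) _
          · simp [hseq]
          · simp [hseq]
        rw [Finset.sum_congr rfl hsplit2, Finset.sum_add_distrib]
        congr 1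
        -- reindex the E-part through the equivalence
        have hterm : ∀ j : Fin n, cc j • toQ κ (gg j k) =
            Sum.elim (fun f : ↥(insert h E) => -l₀ (Sum.inl f) • toQ κ ((f : ℕ → GZ κ) k))
              (fun _ => (0 : GQ κ)) ((e2.symm j) : (↥(insert h E)) ⊕ (Idx κ)) := by
          intro j
          rcases hmem : ((e2.symm j) : (↥(insert h E)) ⊕ (Idx κ)) with f | ξ
          · simp only [hcc, hgg, hmem, Sum.elim_inl]
          · simp only [hcc, hgg, hmem, Sum.elim_inr]
            simp
        rw [Finset.sum_congr rfl (fun j _ => hterm j)]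
        rw [← Finset.sum_coe_sort l₀.support (fun i =>
          Sum.elim (fun f : ↥(insert h E) => -l₀ (Sum.inl f) • toQ κ ((f : ℕ → GZ κ) k))
            (fun _ => (0 : GQ κ)) i)]
        exact (Fintype.sum_equiv e2.symm
          (fun j => Sum.elim
            (fun f : ↥(insert h E) => -l₀ (Sum.inl f) • toQ κ ((f : ℕ → GZ κ) k))
            (fun _ => (0 : GQ κ)) ((e2.symm j) : (↥(insert h E)) ⊕ (Idx κ)))
          (fun i : ↥(l₀.support) => Sum.elim
            (fun f : ↥(insert h E) => -l₀ (Sum.inl f) • toQ κ ((f : ℕ → GZ κ) k))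
            (fun _ => (0 : GQ κ)) ((i : (↥(insert h E)) ⊕ (Idx κ))))
          (fun j => rfl)).symm
  obtain ⟨S, hSq, hdep⟩ := key
  refine ⟨S ∩ A, freeUF_infinite hqfree (q.inter_mem hSq hAq), Set.inter_subset_right, ?_⟩
  exact hdep.mono subset_rfl Set.inter_subset_left

end AuxDep
section AuxTower
variable {κ : Cardinal}

lemma tower_step (E : List (Set ℕ) → Set (ℕ → GZ κ))
    (hEmax : ∀ T, IsTower T → MaximalLinIndepMod κ (lastOf T) (E T))
    (hEmono : ∀ T, IsTower T → ∀ m ≤ T.length, E (T.take m) ⊆ E T)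
    (T : List (Set ℕ)) (hT : IsTower T) (h : ℕ → GZ κ) :
    ∃ T', IsTower T' ∧ E T ⊆ E T' ∧ lastOf T' ⊆ lastOf T ∧ Dep κ (E T') (lastOf T') h := by
  by_cases hh : h ∈ E T
  · exact ⟨T, hT, subset_rfl, subset_rfl, dep_of_mem hh⟩
  · obtain ⟨B, hBinf, hBsub, hdep⟩ := dep_step (hEmax T hT) hh
    obtain ⟨hT', hlast', htake'⟩ := tower_concat hT hBinf hBsub
    have hEsub : E T ⊆ E (T ++ [B]) := by
      have := hEmono (T ++ [B]) hT' T.length (by simp)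
      rwa [htake'] at this
    exact ⟨T ++ [B], hT', hEsub, by rw [hlast']; exact hBsub,
      (hdep.mono hEsub (by rw [hlast'])).mono subset_rfl subset_rfl⟩

lemma multi_step (E : List (Set ℕ) → Set (ℕ → GZ κ))
    (hEmax : ∀ T, IsTower T → MaximalLinIndepMod κ (lastOf T) (E T))
    (hEmono : ∀ T, IsTower T → ∀ m ≤ T.length, E (T.take m) ⊆ E T) :
    ∀ (m : ℕ) (h : Fin m → ℕ → GZ κ),
    ∃ T, IsTower T ∧ ∀ i, Dep κ (E T) (lastOf T) (h i) := by
  intro m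
  induction m with
  | zero => exact fun h => ⟨[], tower_nil, fun i => i.elim0⟩
  | succ m ihm =>
    intro h
    obtain ⟨T, hT, hdep⟩ := ihm (fun i => h i.castSucc)
    obtain ⟨T', hT', hEsub, hlsub, hdep'⟩ := tower_step E hEmax hEmono T hT (h (Fin.last m))
    refine ⟨T', hT', fun i => ?_⟩
    rcases Fin.eq_castSucc_or_eq_last i with ⟨j, rfl⟩ | rfl
    · exact (hdep j).mono hEsub hlsub
    · exact hdep'

end AuxTower
section AuxSmall
variable {κ : Cardinal}

lemma exists_int_smul_factorial {r : ℚ} {N : ℕ} (hden : r.den ≤ N)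
    {V : Type*} [AddCommGroup V] [Module ℚ V] (v : V) :
    ∃ z : ℤ, r • v = z • (((N.factorial : ℚ))⁻¹ • v) := by
  obtain ⟨t, ht⟩ := Nat.dvd_factorial r.pos hden
  refine ⟨r.num * t, ?_⟩
  have hfac : (N.factorial : ℚ) ≠ 0 := by
    exact_mod_cast (Nat.factorial_pos N).ne'
  have hz : ((r.num * (t : ℤ) : ℤ) : ℚ) = r * N.factorial := by
    have hden0 : (r.den : ℚ) ≠ 0 := by exact_mod_cast r.den_nz
    have hnum : (r.num : ℚ) = r * r.den := by
      have h := Rat.num_div_den r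
      rw [div_eq_iff hden0] at h
      rw [h]
    push_cast
    rw [hnum, ht]
    push_cast
    ring
  rw [← Int.cast_smul_eq_zsmul ℚ, smul_smul, hz, mul_assoc, mul_inv_cancel₀ hfac, mul_one]

lemma const_germ_eq_sum (p : Ultrafilter ℕ) (w : GQ κ) :
    (↑(fun _ : ℕ => w) : Filter.Germ (↑p : Filter ℕ) (GQ κ)) =
      ∑ ξ ∈ w.support, (w ξ) • clsChi κ p ξ := by
  have h1 : ∀ ξ : Idx κ, (w ξ) • clsChi κ p ξ =
      (↑(fun _ : ℕ => Finsupp.single ξ (w ξ)) : Filter.Germ (↑p : Filter ℕ) (GQ κ)) := by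
    intro ξ
    have : clsChi κ p ξ =
        (↑(fun _ : ℕ => Finsupp.single ξ (1 : ℚ)) : Filter.Germ (↑p : Filter ℕ) (GQ κ)) := by
      unfold clsChi cls chi toQ
      congr 1
      funext k
      exact Finsupp.mapRange_single
    rw [this, ← Filter.Germ.coe_smul]
    congr 1
    funext k
    simp [Finsupp.smul_single']
  rw [Finset.sum_congr rfl (fun ξ _ => h1 ξ), ← germ_coe_sum]
  congr 1
  funext k
  rw [Finset.sum_apply]
  conv_lhs => rw [← Finsupp.sum_single w]
  rfl

end AuxSmall
section AuxMain
variable {κ : Cardinal}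

lemma exists_plim
    (p : List (Set ℕ) → ℕ → Ultrafilter ℕ)
    (hfree : ∀ T, IsTower T → ∀ n, IsFreeUltrafilter (p T n))
    (hlast : ∀ T, IsTower T → ∀ n, lastOf T ∈ p T n)
    (E : List (Set ℕ) → Set (ℕ → GZ κ))
    (hEmax : ∀ T, IsTower T → MaximalLinIndepMod κ (lastOf T) (E T))
    (hEmono : ∀ T, IsTower T → ∀ m ≤ T.length, E (T.take m) ⊆ E T)
    (F : List (Set ℕ) → ℕ → Set (ℕ → GZ κ))
    (hbasis : ∀ T, IsTower T → ∀ n : ℕ,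
      ∃ b : Module.Basis ((Idx κ) ⊕ (F T n)) ℤ ↥(Gsub κ (p T n) (E T) n),
        (∀ ξ : Idx κ,
          ((b (Sum.inl ξ) : ↥(Gsub κ (p T n) (E T) n)) :
            Filter.Germ (↑(p T n) : Filter ℕ) (GQ κ)) = clsChi κ (p T n) ξ) ∧
        (∀ g : F T n,
          ((b (Sum.inr g) : ↥(Gsub κ (p T n) (E T) n)) :
            Filter.Germ (↑(p T n) : Filter ℕ) (GQ κ)) = cls κ (p T n) ↑g))
    [ts : TopologicalSpace (GZ κ)] [tg : @IsTopologicalAddGroup (GZ κ) ts _]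
    (hlim : ∀ T, IsTower T → ∀ n : ℕ, ∀ f ∈ F T n, ∃ l : GZ κ, IsPLim (p T n) f l)
    (m : ℕ) (s : ℕ → Fin m → GZ κ) :
    ∃ P : Ultrafilter ℕ, IsFreeUltrafilter P ∧
      ∃ L : Fin m → GZ κ, Filter.Tendsto s (↑P : Filter ℕ) (nhds L) := by
  classical
  obtain ⟨T, hT, hdep⟩ := multi_step E hEmax hEmono m (fun i k => s k i)
  choose a nn g c w ha hc heqn using hdep
  set D : Fin m → ℕ := fun i =>
    (Finset.univ.sup fun j => ((a i)⁻¹ * c i j).den) ⊔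
    ((w i).support.sup fun ξ => ((a i)⁻¹ * w i ξ).den) with hD
  set N : ℕ := Finset.univ.sup D with hN
  set P := p T N with hP
  have hPfree := hfree T hT N
  have hPlast : lastOf T ∈ (↑P : Filter ℕ) := hlast T hT N
  -- the germ identity
  have hgermi : ∀ i, (a i) • cls κ P (fun k => s k i) =
      (∑ j, c i j • cls κ P (g i j)) +
      (↑(fun _ : ℕ => w i) : Filter.Germ (↑P : Filter ℕ) (GQ κ)) := by
    intro i
    have hev : ∀ᶠ k in (↑P : Filter ℕ),
        a i • toQ κ (s k i) = (∑ j, c i j • toQ κ (g i j k)) + w i :=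
      Filter.eventually_of_mem hPlast (heqn i)
    have hL : (a i) • cls κ P (fun k => s k i) =
        (↑(fun k => a i • toQ κ (s k i)) : Filter.Germ (↑P : Filter ℕ) (GQ κ)) := by
      rw [cls, ← Filter.Germ.coe_smul]
      rfl
    have hR : (∑ j, c i j • cls κ P (g i j)) +
        (↑(fun _ : ℕ => w i) : Filter.Germ (↑P : Filter ℕ) (GQ κ)) =
        (↑(fun k => (∑ j, c i j • toQ κ (g i j k)) + w i) :
          Filter.Germ (↑P : Filter ℕ) (GQ κ)) := by
      have h2 : ∀ j, c i j • cls κ P (g i j) =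
          (↑(fun k => c i j • toQ κ (g i j k)) : Filter.Germ (↑P : Filter ℕ) (GQ κ)) := by
        intro j
        rw [cls, ← Filter.Germ.coe_smul]
        rfl
      rw [Finset.sum_congr rfl (fun j _ => h2 j), ← germ_coe_sum, ← Filter.Germ.coe_add]
      congr 1
      funext k
      simp [Finset.sum_apply]
    rw [hL, hR, Filter.Germ.coe_eq]
    exact hev
  -- membership in `Gsub`
  have hmemG : ∀ i, cls κ P (fun k => s k i) ∈ Gsub κ P (E T) N := by
    intro i
    refine AddSubgroup.mem_inf.2 ⟨⟨(fun k => s k i), rfl⟩, ?_⟩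
    have hDi : D i ≤ N := Finset.le_sup (Finset.mem_univ i)
    simp only [hD] at hDi
    have hkey : cls κ P (fun k => s k i) =
        (∑ j, ((a i)⁻¹ * c i j) • cls κ P (g i j)) +
        (∑ ξ ∈ (w i).support, ((a i)⁻¹ * w i ξ) • clsChi κ P ξ) := by
      have h0 : cls κ P (fun k => s k i) = (a i)⁻¹ • ((a i) • cls κ P (fun k => s k i)) := by
        rw [smul_smul, inv_mul_cancel₀ (ha i), one_smul]
      rw [h0, hgermi i, const_germ_eq_sum, smul_add, Finset.smul_sum, Finset.smul_sum]
      congr 1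
      · exact Finset.sum_congr rfl (fun j _ => by rw [smul_smul])
      · exact Finset.sum_congr rfl (fun ξ _ => by rw [smul_smul])
    rw [hkey]
    refine AddSubgroup.add_mem _ (AddSubgroup.sum_mem _ ?_) (AddSubgroup.sum_mem _ ?_)
    · intro j _
      rcases hc i j with h0 | hE
      · simp only [h0, mul_zero, zero_smul]
        exact AddSubgroup.zero_mem _
      · have hd1 : ((a i)⁻¹ * c i j).den ≤
            (Finset.univ.sup fun j => ((a i)⁻¹ * c i j).den) :=
          Finset.le_sup (f := fun j => ((a i)⁻¹ * c i j).den) (Finset.mem_univ j)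
        have hden : ((a i)⁻¹ * c i j).den ≤ N := le_trans (le_trans hd1 le_sup_left) hDi
        obtain ⟨z, hz⟩ := exists_int_smul_factorial hden (cls κ P (g i j))
        rw [hz]
        refine AddSubgroup.zsmul_mem _ (AddSubgroup.subset_closure ?_) z
        exact Set.mem_union_left _ ⟨g i j, hE, rfl⟩
    · intro ξ hξ
      have hd2 : ((a i)⁻¹ * w i ξ).den ≤
          ((w i).support.sup fun ξ => ((a i)⁻¹ * w i ξ).den) :=
        Finset.le_sup (f := fun ξ => ((a i)⁻¹ * w i ξ).den) hξ
      have hden : ((a i)⁻¹ * w i ξ).den ≤ N := le_trans (le_trans hd2 le_sup_right) hDi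
      obtain ⟨z, hz⟩ := exists_int_smul_factorial hden (clsChi κ P ξ)
      rw [hz]
      refine AddSubgroup.zsmul_mem _ (AddSubgroup.subset_closure ?_) z
      exact Set.mem_union_right _ ⟨ξ, rfl⟩
  -- basis representation and limits
  obtain ⟨b, hbchi, hbF⟩ := hbasis T hT N
  choose lf hlf using fun gz : ↥(F T N) => hlim T hT N ↑gz gz.2
  have hco : ∀ i : Fin m, ∃ Li : GZ κ,
      Filter.Tendsto (fun k => s k i) (↑P : Filter ℕ) (nhds Li) := by
    intro i
    set x : ↥(Gsub κ P (E T) N) := ⟨cls κ P (fun k => s k i), hmemG i⟩ with hx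
    set r := b.repr x with hr
    set u : ((Idx κ) ⊕ ↥(F T N)) → (ℕ → GZ κ) :=
      Sum.elim (fun ξ => fun _ => chi κ ξ) (fun gz => (gz : ℕ → GZ κ)) with hu
    have hbu : ∀ j, ((b j : ↥(Gsub κ P (E T) N)) :
        Filter.Germ (↑P : Filter ℕ) (GQ κ)) = cls κ P (u j) := by
      rintro (ξ | gz)
      · rw [hbchi]; rfl
      · rw [hbF]; rfl
    have h5 : cls κ P (fun k => s k i) =
        ∑ j ∈ r.support, r j • ((b j : ↥(Gsub κ P (E T) N)) :
          Filter.Germ (↑P : Filter ℕ) (GQ κ)) := by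
      have h5a := b.linearCombination_repr x
      have h5b := congrArg (((Gsub κ P (E T) N).subtype : _ →+ _)) h5a
      rw [Finsupp.linearCombination_apply, Finsupp.sum, map_sum] at h5b
      have h5c : ∀ j ∈ r.support, (Gsub κ P (E T) N).subtype (r j • b j) =
          r j • ((b j : ↥(Gsub κ P (E T) N)) : Filter.Germ (↑P : Filter ℕ) (GQ κ)) := by
        intro j _
        exact map_zsmul ((Gsub κ P (E T) N).subtype) _ _
      rw [Finset.sum_congr rfl h5c] at h5b
      exact h5b.symm
    set y : ℕ → GZ κ := ∑ j ∈ r.support, r j • u j with hy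
    have h6 : cls κ P y = cls κ P (fun k => s k i) := by
      have h6a : cls κ P y = (clsHom κ P) y := rfl
      rw [h6a, hy, map_sum]
      rw [h5]
      refine Finset.sum_congr rfl (fun j _ => ?_)
      rw [map_zsmul, hbu j]
      rfl
    have hev : ∀ᶠ k in (↑P : Filter ℕ), y k = s k i := cls_eq_iff.1 h6
    -- limits of the basis sequences
    set Lu : ((Idx κ) ⊕ ↥(F T N)) → GZ κ := Sum.elim (fun ξ => chi κ ξ) lf with hLu
    have hut : ∀ j, Filter.Tendsto (u j) (↑P : Filter ℕ) (nhds (Lu j)) := by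
      rintro (ξ | gz)
      · exact tendsto_const_nhds
      · rw [Filter.tendsto_def]
        intro U hU
        exact (hlf gz) U hU
    refine ⟨∑ j ∈ r.support, r j • Lu j, ?_⟩
    have h7 : Filter.Tendsto y (↑P : Filter ℕ) (nhds (∑ j ∈ r.support, r j • Lu j)) := by
      have hyk : y = fun k => ∑ j ∈ r.support, r j • u j k := by
        funext k
        rw [hy, Finset.sum_apply]
        rfl
      rw [hyk]
      refine tendsto_finset_sum _ (fun j _ => ?_)
      exact ((continuous_zsmul (r j)).tendsto (Lu j)).comp (hut j)
    exact h7.congr' hev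
  choose L hL using hco
  exact ⟨P, hPfree, L, tendsto_pi_nhds.2 hL⟩

end AuxMain
theorem statement11 (κ : Cardinal) (hκ : ℵ₀ ≤ κ) (hpow : κ ^ ℵ₀ = κ)
    (p : List (Set ℕ) → ℕ → Ultrafilter ℕ)
    (hsel : ∀ T, IsTower T → ∀ n, IsSelective (p T n))
    (hinc : ∀ T T', IsTower T → IsTower T' → ∀ n n' : ℕ, (T, n) ≠ (T', n') →
      RKIncomp (p T n) (p T' n'))
    (hlast : ∀ T, IsTower T → ∀ n, lastOf T ∈ p T n)
    (E : List (Set ℕ) → Set (ℕ → GZ κ))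
    (hEmax : ∀ T, IsTower T → MaximalLinIndepMod κ (lastOf T) (E T))
    (hEmono : ∀ T, IsTower T → ∀ m ≤ T.length, E (T.take m) ⊆ E T)
    (F : List (Set ℕ) → ℕ → Set (ℕ → GZ κ))
    (hbasis : ∀ T, IsTower T → ∀ n : ℕ,
      ∃ b : Module.Basis ((Idx κ) ⊕ (F T n)) ℤ ↥(Gsub κ (p T n) (E T) n),
        (∀ ξ : Idx κ,
          ((b (Sum.inl ξ) : ↥(Gsub κ (p T n) (E T) n)) :
            Filter.Germ (↑(p T n) : Filter ℕ) (GQ κ)) = clsChi κ (p T n) ξ) ∧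
        (∀ g : F T n,
          ((b (Sum.inr g) : ↥(Gsub κ (p T n) (E T) n)) :
            Filter.Germ (↑(p T n) : Filter ℕ) (GQ κ)) = cls κ (p T n) ↑g))
    [ts : TopologicalSpace (GZ κ)] [tg : @IsTopologicalAddGroup (GZ κ) ts _]
    (hlim : ∀ T, IsTower T → ∀ n : ℕ, ∀ f ∈ F T n, ∃ l : GZ κ, IsPLim (p T n) f l) :
    ∀ m : ℕ, CountablyCompactSp (Fin m → GZ κ) := by
  classical
  intro m 𝒰 hcount hopen hcover
  by_contra hnc
  push_neg at hnc
  -- 𝒰 is nonempty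
  have hne : 𝒰.Nonempty := by
    rcases Set.eq_empty_or_nonempty 𝒰 with h | h
    · exact absurd (h ▸ hcover) (by simpa using hnc ∅ (Set.empty_subset _) Set.finite_empty)
    · exact h
  obtain ⟨u, hu⟩ := hcount.exists_eq_range hne
  -- a sequence avoiding all finite initial unions
  have hpt : ∀ n : ℕ, ∃ x : Fin m → GZ κ, x ∉ ⋃₀ (u '' Set.Iic n) := by
    intro n
    have h1 : u '' Set.Iic n ⊆ 𝒰 := by
      rintro _ ⟨k, _, rfl⟩
      rw [hu]
      exact Set.mem_range_self k
    have h2 : (u '' Set.Iic n).Finite := (Set.finite_Iic n).image u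
    have h3 := hnc (u '' Set.Iic n) h1 h2
    rw [← Set.ne_univ_iff_exists_notMem]
    exact h3
  choose sq hsq using hpt
  -- a p-limit of the sequence
  obtain ⟨P, hPfree, L, hL⟩ := exists_plim p (fun T hT n => (hsel T hT n).1) hlast
    E hEmax hEmono F hbasis hlim m sq
  -- the limit lies in some member of the cover
  have hLu : L ∈ ⋃₀ 𝒰 := by rw [hcover]; exact Set.mem_univ L
  obtain ⟨U, hU𝒰, hLU⟩ := hLu
  rw [hu] at hU𝒰
  obtain ⟨NU, rfl⟩ := hU𝒰
  have hopenU : IsOpen (u NU) := hopen (u NU) (by rw [hu]; exact Set.mem_range_self NU)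
  have hnhds : u NU ∈ nhds L := hopenU.mem_nhds hLU
  have hmem : {k | sq k ∈ u NU} ∈ P := hL hnhds
  have hinf : {k | sq k ∈ u NU}.Infinite := freeUF_infinite hPfree hmem
  obtain ⟨k, hk, hNk⟩ := hinf.exists_gt NU
  exact hsq k ⟨u NU, ⟨NU, le_of_lt hNk, rfl⟩, hk⟩

end
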